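/- Assume the standard setup, and let ℓ ≥ 3 be an integer with q ≡ 2^ℓ − 1 (mod 2^{ℓ+1}). Let H_ℓ be the unique subgroup of Fˣ of order (q+1)/2^ℓ, let θ ∈ Fˣ be an element of multiplicative order 2^ℓ, and let 𝓗 = { θ^i·h : 0 ≤ i ≤ 2^{ℓ−1} − 1, h ∈ H_ℓ } ⊆ Fˣ. Then: (1) H is the disjoint union of 𝓗 and −𝓗 = { −β : β ∈ 𝓗 }; (2) the only elements of H that lie in K are 1 and −1; and (3) for all β1, β2 ∈ 𝓗 with β1 ≠ β2 and all nonzero c1, c2 ∈ K, one has c1·β1 ≠ c2·β2 (so the twisted half generalized Zetterberg code C_s^t(q0), whose parity check matrix has the elements of 𝓗 as columns, has no nonzero codeword of weight at most 2, i.e., minimum distance at least 3). -/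

import Mathlib

def twistedHalfSet {F : Type*} [Field F] (Hl : Subgroup Fˣ) (θ : Fˣ) (ℓ : ℕ) :
    Set Fˣ :=
  {β | ∃ i : ℕ, i < 2 ^ (ℓ - 1) ∧ ∃ h ∈ Hl, β = θ ^ i * h}

lemma subgroup_mem_iff_pow_eq_one {F : Type*} [Field F] [Fintype F]
    (A : Subgroup Fˣ) {n : ℕ} (hn : 0 < n) (hA : Nat.card A = n) (x : Fˣ) :
    x ∈ A ↔ x ^ n = 1 := by
  classical
  have fwd : ∀ y : Fˣ, y ∈ A → y ^ n = 1 := by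
    intro y hy
    have h1 : (⟨y, hy⟩ : A) ^ n = 1 := by rw [← hA]; exact pow_card_eq_one'
    have := congrArg (fun a : A => (a : Fˣ)) h1
    simpa using this
  constructor
  · exact fwd x
  · intro hx
    set S : Finset Fˣ := Finset.univ.filter (fun g => g ^ n = 1) with hSdef
    have hScard : S.card ≤ n := by
      calc S.card ≤ Multiset.card (Polynomial.nthRoots n ((Units.coeHom F) 1)) := by
            exact card_nthRoots_subgroup_units (Units.coeHom F) (fun _ _ h => Units.ext h) hn 1
        _ ≤ n := by simpa using Polynomial.card_nthRoots n (1 : F)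
    set A' : Finset Fˣ := Finset.univ.filter (fun g => g ∈ A) with hA'def
    have hA'card : A'.card = n := by
      rw [← hA, Nat.card_eq_fintype_card]
      simp [hA'def, Fintype.card_subtype]
    have hsub : A' ⊆ S := by
      intro g hg
      simp only [hA'def, Finset.mem_filter, Finset.mem_univ, true_and] at hg
      simp only [hSdef, Finset.mem_filter, Finset.mem_univ, true_and]
      exact fwd g hg
    have : A' = S := Finset.eq_of_subset_of_card_le hsub (by omega)
    have hxS : x ∈ S := by simp [hSdef, hx]
    rw [← this] at hxS
    simpa [hA'def] using hxS

/-- Standard setup, `ℓ ≥ 3`, `q ≡ 2^ℓ − 1 (mod 2^(ℓ+1))`, `H_ℓ` the subgroup of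
order `(q+1)/2^ℓ`, `θ` of order `2^ℓ`, and `𝓗 = { θ^i·h : 0 ≤ i < 2^(ℓ−1), h ∈ H_ℓ }`.
Then (1) `H` is the disjoint union of `𝓗` and `−𝓗`; (2) the only elements of `H`
lying in `K` are `±1`; (3) distinct elements of `𝓗` are not proportional over
`Kˣ` — so the twisted half generalized Zetterberg code has minimum distance `≥ 3`. -/
theorem twisted_half_min_dist_ge_three (q0 s q ℓ : ℕ) (hq0 : IsPrimePow q0)
    (hq0odd : Odd q0) (hs : Odd s) (hq : q = q0 ^ s) (hℓ : 3 ≤ ℓ)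
    (hqmod : q ≡ 2 ^ ℓ - 1 [MOD 2 ^ (ℓ + 1)])
    (F : Type*) [Field F] [Fintype F] (hF : Fintype.card F = q ^ 2)
    (K : Subfield F) (hK : Nat.card K = q0)
    (H : Subgroup Fˣ) (hH : Nat.card H = q + 1)
    (Hl : Subgroup Fˣ) (hHl : Nat.card Hl = (q + 1) / 2 ^ ℓ)
    (θ : Fˣ) (hθ : orderOf θ = 2 ^ ℓ) :
    ((H : Set Fˣ) = twistedHalfSet Hl θ ℓ ∪ {β | -β ∈ twistedHalfSet Hl θ ℓ} ∧
        twistedHalfSet Hl θ ℓ ∩ {β | -β ∈ twistedHalfSet Hl θ ℓ} = ∅) ∧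
      (∀ h : Fˣ, h ∈ H → ((h : F) ∈ K ↔ (h : F) = 1 ∨ (h : F) = -1)) ∧
      (∀ β1 ∈ twistedHalfSet Hl θ ℓ, ∀ β2 ∈ twistedHalfSet Hl θ ℓ, β1 ≠ β2 →
        ∀ c1 c2 : F, c1 ∈ K → c2 ∈ K → c1 ≠ 0 → c2 ≠ 0 →
          c1 * (β1 : F) ≠ c2 * (β2 : F)) := by
  classical
  -- basic numerology
  have hq0two : 2 ≤ q0 := hq0.two_le
  have hq1 : 1 ≤ q := hq ▸ Nat.one_le_pow _ _ (by omega)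
  set m : ℕ := (q + 1) / 2 ^ ℓ with hm
  have htpos : (0:ℕ) < 2 ^ ℓ := Nat.pow_pos (by norm_num)
  have hfact : 2 ^ ℓ * m = q + 1 ∧ Odd m := by
    have hlt : 2 ^ ℓ - 1 < 2 ^ (ℓ + 1) := by
      have : 2 ^ ℓ < 2 ^ (ℓ + 1) := Nat.pow_lt_pow_right (by norm_num) (by omega)
      omega
    have hmod : q % 2 ^ (ℓ + 1) = 2 ^ ℓ - 1 := by
      have := hqmod
      unfold Nat.ModEq at this
      rwa [Nat.mod_eq_of_lt hlt] at this
    have hdm := Nat.div_add_mod q (2 ^ (ℓ + 1))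
    set k := q / 2 ^ (ℓ + 1) with hk
    have h2 : 2 ^ (ℓ + 1) = 2 * 2 ^ ℓ := by rw [pow_succ]; ring
    have hq1' : q + 1 = 2 ^ ℓ * (2 * k + 1) := by
      rw [hmod] at hdm
      have hexp : 2 ^ ℓ * (2 * k + 1) = 2 ^ (ℓ + 1) * k + 2 ^ ℓ := by rw [h2]; ring
      omega
    constructor
    · rw [hm, hq1', Nat.mul_div_cancel_left _ htpos]
    · rw [hm, hq1', Nat.mul_div_cancel_left _ htpos]
      exact ⟨k, by ring⟩
  obtain ⟨hfac, hmodd⟩ := hfact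
  have hmpos : 0 < m := by nlinarith
  have hcop : Nat.Coprime (2 ^ ℓ) m :=
    Nat.Coprime.pow_left _ (Nat.coprime_two_left.mpr hmodd)
  -- membership characterizations
  have hmemH : ∀ x : Fˣ, x ∈ H ↔ x ^ (q + 1) = 1 :=
    subgroup_mem_iff_pow_eq_one H (by omega) hH
  have hmemHl : ∀ x : Fˣ, x ∈ Hl ↔ x ^ m = 1 :=
    subgroup_mem_iff_pow_eq_one Hl hmpos hHl
  have hcardT : Nat.card (Subgroup.zpowers θ) = 2 ^ ℓ := by
    rw [Nat.card_zpowers, hθ]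
  have hmemT : ∀ x : Fˣ, x ∈ Subgroup.zpowers θ ↔ x ^ (2 ^ ℓ) = 1 :=
    subgroup_mem_iff_pow_eq_one _ htpos hcardT
  have hθpow : θ ^ (2 ^ ℓ) = 1 := by rw [← hθ]; exact pow_orderOf_eq_one θ
  have hθH : θ ∈ H := by
    rw [hmemH, ← hfac, pow_mul, hθpow, one_pow]
  have hHlH : ∀ x : Fˣ, x ∈ Hl → x ∈ H := by
    intro x hx
    rw [hmemHl] at hx
    rw [hmemH, ← hfac, mul_comm, pow_mul, hx, one_pow]
  have hℓ1 : 2 ^ (ℓ - 1) * 2 = 2 ^ ℓ := by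
    rw [← pow_succ]
    congr 1
    omega
  -- θ ^ 2^(ℓ-1) = -1
  have hneg1 : θ ^ (2 ^ (ℓ - 1)) = -1 := by
    have hsq : (θ ^ (2 ^ (ℓ - 1))) ^ 2 = 1 := by
      rw [← pow_mul, hℓ1, hθpow]
    have hne : θ ^ (2 ^ (ℓ - 1)) ≠ 1 := by
      intro h1
      have := orderOf_dvd_of_pow_eq_one h1
      rw [hθ] at this
      have hle := Nat.le_of_dvd (Nat.pow_pos (by norm_num)) this
      have : 2 ^ (ℓ - 1) < 2 ^ ℓ := Nat.pow_lt_pow_right (by norm_num) (by omega)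
      omega
    have hsqF : ((θ ^ (2 ^ (ℓ - 1)) : Fˣ) : F) * ((θ ^ (2 ^ (ℓ - 1)) : Fˣ) : F) = 1 := by
      have := congrArg (Units.val) hsq
      push_cast at this
      rw [pow_two] at this
      exact_mod_cast this
    rcases mul_self_eq_one_iff.mp hsqF with h | h
    · exact absurd (Units.ext h) hne
    · ext
      rw [h]
      simp
  -- decomposition of elements of H
  have hdecomp : ∀ x : Fˣ, x ∈ H → ∃ j : ℕ, j < 2 ^ ℓ ∧ ∃ h ∈ Hl, x = θ ^ j * h := by
    intro x hx
    rw [hmemH] at hx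
    have hbez : (1 : ℤ) = 2 ^ ℓ * Nat.gcdA (2 ^ ℓ) m + m * Nat.gcdB (2 ^ ℓ) m := by
      have := Nat.gcd_eq_gcd_ab (2 ^ ℓ) m
      rw [hcop] at this
      push_cast at this ⊢
      linarith
    set a := Nat.gcdA (2 ^ ℓ) m
    set b := Nat.gcdB (2 ^ ℓ) m
    have hx1 : x = x ^ ((m : ℤ) * b) * x ^ ((2 ^ ℓ : ℤ) * a) := by
      rw [← zpow_add]
      have he : (m : ℤ) * b + (2 ^ ℓ : ℤ) * a = 1 := by linarith
      rw [he, zpow_one]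
    set y := x ^ ((m : ℤ) * b) with hy
    set z := x ^ ((2 ^ ℓ : ℤ) * a) with hz
    have hyT : y ∈ Subgroup.zpowers θ := by
      rw [hmemT, hy, ← zpow_natCast, ← zpow_mul]
      push_cast
      have hfz : ((2 : ℤ) ^ ℓ) * m = (q : ℤ) + 1 := by exact_mod_cast congrArg (Nat.cast : ℕ → ℤ) hfac
      have he : (m : ℤ) * b * (2 ^ ℓ : ℤ) = ((q : ℤ) + 1) * b := by
        calc (m : ℤ) * b * (2 ^ ℓ : ℤ) = ((2 : ℤ) ^ ℓ * m) * b := by ring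
          _ = ((q : ℤ) + 1) * b := by rw [hfz]
      rw [he, zpow_mul]
      have : x ^ ((q : ℤ) + 1) = 1 := by
        have := hx
        rw [show ((q : ℤ) + 1) = ((q + 1 : ℕ) : ℤ) by push_cast; ring, zpow_natCast, hx]
      rw [this, one_zpow]
    have hzHl : z ∈ Hl := by
      rw [hmemHl, hz, ← zpow_natCast, ← zpow_mul]
      have hfz : ((2 : ℤ) ^ ℓ) * m = (q : ℤ) + 1 := by exact_mod_cast congrArg (Nat.cast : ℕ → ℤ) hfac
      have he : (2 ^ ℓ : ℤ) * a * (m : ℤ) = ((q : ℤ) + 1) * a := by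
        calc (2 ^ ℓ : ℤ) * a * (m : ℤ) = ((2 : ℤ) ^ ℓ * m) * a := by ring
          _ = ((q : ℤ) + 1) * a := by rw [hfz]
      rw [he, zpow_mul]
      have : x ^ ((q : ℤ) + 1) = 1 := by
        rw [show ((q : ℤ) + 1) = ((q + 1 : ℕ) : ℤ) by push_cast; ring, zpow_natCast, hx]
      rw [this, one_zpow]
    -- y is a natural power of θ
    have hyθ : ∃ j : ℕ, j < 2 ^ ℓ ∧ y = θ ^ j := by
      have : y ∈ Submonoid.powers θ := mem_powers_iff_mem_zpowers.mpr hyT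
      obtain ⟨j, hj⟩ := this
      refine ⟨j % 2 ^ ℓ, Nat.mod_lt _ htpos, ?_⟩
      rw [← hj, ← hθ, pow_mod_orderOf]
    obtain ⟨j, hjlt, hjy⟩ := hyθ
    exact ⟨j, hjlt, z, hzHl, by rw [hx1, hjy]⟩
  -- 𝓗 ⊆ H
  have hTHsub : twistedHalfSet Hl θ ℓ ⊆ (H : Set Fˣ) := by
    rintro β ⟨i, hi, h, hh, rfl⟩
    exact H.mul_mem (H.pow_mem hθH i) (hHlH h hh)
  have hneg1H : (-1 : Fˣ) ∈ H := by rw [← hneg1]; exact H.pow_mem hθH _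
  have hhalf : 2 ^ (ℓ - 1) < 2 ^ ℓ := Nat.pow_lt_pow_right (by norm_num) (by omega)
  -- part 1, union
  have hunion : (H : Set Fˣ) = twistedHalfSet Hl θ ℓ ∪ {β | -β ∈ twistedHalfSet Hl θ ℓ} := by
    ext x
    constructor
    · intro hx
      obtain ⟨j, hjlt, h, hh, rfl⟩ := hdecomp x hx
      by_cases hcase : j < 2 ^ (ℓ - 1)
      · exact Or.inl ⟨j, hcase, h, hh, rfl⟩
      · refine Or.inr ⟨j - 2 ^ (ℓ - 1), by omega, h, hh, ?_⟩
        have hj' : j = 2 ^ (ℓ - 1) + (j - 2 ^ (ℓ - 1)) := by omega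
        conv_lhs => rw [hj']
        rw [pow_add, hneg1, mul_assoc, neg_one_mul, neg_neg]
    · intro hx
      rcases hx with hx | hx
      · exact hTHsub hx
      · have h1 : -x ∈ H := hTHsub hx
        have h2 := H.mul_mem hneg1H h1
        simpa using h2
  -- triviality of intersection of ⟨θ⟩ and Hl
  have htriv : ∀ u : Fˣ, u ^ (2 ^ ℓ) = 1 → u ^ m = 1 → u = 1 := by
    intro u h1 h2
    have d1 := orderOf_dvd_of_pow_eq_one h1
    have d2 := orderOf_dvd_of_pow_eq_one h2
    have hd := Nat.dvd_gcd d1 d2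
    rw [Nat.Coprime] at hcop
    rw [hcop, Nat.dvd_one] at hd
    exact orderOf_eq_one_iff.mp hd
  -- part 1, disjointness
  have hdisj : twistedHalfSet Hl θ ℓ ∩ {β | -β ∈ twistedHalfSet Hl θ ℓ} = ∅ := by
    ext x
    simp only [Set.mem_inter_iff, Set.mem_empty_iff_false, iff_false, not_and]
    rintro ⟨i, hi, h, hh, rfl⟩ ⟨j, hj, h', hh', heq⟩
    have heq2 : θ ^ (2 ^ (ℓ - 1) + i) * h = θ ^ j * h' := by
      rw [pow_add, hneg1, ← heq, mul_assoc, neg_one_mul]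
    set u := θ ^ (2 ^ (ℓ - 1) + i) * (θ ^ j)⁻¹ with hu
    have huHl : u = h' * h⁻¹ := by
      have hcalc : θ ^ (2 ^ (ℓ - 1) + i) = θ ^ j * (h' * h⁻¹) := by
        rw [← mul_assoc, ← heq2, mul_assoc, mul_inv_cancel, mul_one]
      rw [hu, hcalc, mul_comm (θ ^ j) _, mul_assoc, mul_inv_cancel, mul_one]
    have hu1 : u ^ (2 ^ ℓ) = 1 := by
      rw [hu, mul_pow, inv_pow, ← pow_mul, ← pow_mul,
        mul_comm (2 ^ (ℓ - 1) + i) (2 ^ ℓ), mul_comm j (2 ^ ℓ),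
        pow_mul, pow_mul, hθpow, one_pow, one_pow, inv_one, mul_one]
    have hu2 : u ^ m = 1 := by
      rw [huHl, mul_pow, inv_pow, (hmemHl h').mp hh', (hmemHl h).mp hh, inv_one, mul_one]
    have hueq := htriv u hu1 hu2
    rw [hu, mul_inv_eq_one] at hueq
    rw [pow_inj_mod, hθ] at hueq
    rw [Nat.mod_eq_of_lt (by omega), Nat.mod_eq_of_lt (by omega)] at hueq
    omega
  -- part 2
  have hpart2 : ∀ h : Fˣ, h ∈ H → ((h : F) ∈ K ↔ (h : F) = 1 ∨ (h : F) = -1) := by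
    intro h hhH
    constructor
    · intro hK'
      -- order of h divides q0 - 1
      haveI : Fintype K := Fintype.ofFinite K
      have hKcard : Fintype.card K = q0 := by rw [← Nat.card_eq_fintype_card, hK]
      have hxne : (⟨(h : F), hK'⟩ : K) ≠ 0 := by
        intro h0
        have := congrArg (fun a : K => (a : F)) h0
        simpa using this
      have hpow : (⟨(h : F), hK'⟩ : K) ^ (q0 - 1) = 1 := by
        rw [← hKcard]
        exact FiniteField.pow_card_sub_one_eq_one _ hxne
      have hpowF : (h : F) ^ (q0 - 1) = 1 := by
        have := congrArg (fun a : K => (a : F)) hpow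
        push_cast at this
        exact this
      have hd1 : orderOf h ∣ q0 - 1 := by
        rw [← orderOf_units]
        exact orderOf_dvd_of_pow_eq_one hpowF
      have hd2 : orderOf h ∣ q + 1 := orderOf_dvd_of_pow_eq_one ((hmemH h).mp hhH)
      have hd3 : q0 - 1 ∣ q - 1 := by
        rw [hq]
        simpa using Nat.sub_dvd_pow_sub_pow q0 1 s
      have hd4 : orderOf h ∣ q - 1 := hd1.trans hd3
      have hd5 : orderOf h ∣ 2 := by
        have := Nat.dvd_sub hd2 hd4
        rwa [show q + 1 - (q - 1) = 2 by omega] at this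
      have hsq : h ^ 2 = 1 := orderOf_dvd_iff_pow_eq_one.mp hd5
      have hsqF : (h : F) * (h : F) = 1 := by
        have := congrArg (Units.val) hsq
        push_cast at this
        rw [pow_two] at this
        exact_mod_cast this
      exact mul_self_eq_one_iff.mp hsqF
    · rintro (h1 | h1) <;> rw [h1]
      · exact one_mem K
      · exact neg_mem (one_mem K)
  refine ⟨⟨hunion, hdisj⟩, hpart2, ?_⟩
  -- part 3
  intro β1 hβ1 β2 hβ2 hne c1 c2 hc1 hc2 hc1ne hc2ne heq
  have hβ1H : β1 ∈ H := hTHsub hβ1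
  have hβ2H : β2 ∈ H := hTHsub hβ2
  have huH : β1 * β2⁻¹ ∈ H := H.mul_mem hβ1H (H.inv_mem hβ2H)
  have huK : ((β1 * β2⁻¹ : Fˣ) : F) ∈ K := by
    have hval : ((β1 * β2⁻¹ : Fˣ) : F) = c2 * c1⁻¹ := by
      push_cast
      field_simp
      linear_combination heq
    rw [hval]
    exact mul_mem hc2 (inv_mem hc1)
  rcases (hpart2 _ huH).mp huK with h1 | h1
  · apply hne
    have : β1 * β2⁻¹ = 1 := Units.ext (by simpa using h1)
    rwa [mul_inv_eq_one] at this
  · have : β1 * β2⁻¹ = -1 := Units.ext (by simpa using h1)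
    have hβ : β1 = -β2 := by
      rw [mul_inv_eq_iff_eq_mul] at this
      rw [this, neg_one_mul]
    have hmem : β1 ∈ twistedHalfSet Hl θ ℓ ∩ {β | -β ∈ twistedHalfSet Hl θ ℓ} := by
      refine ⟨hβ1, ?_⟩
      show -β1 ∈ twistedHalfSet Hl θ ℓ
      rw [hβ, neg_neg]
      exact hβ2
    rw [hdisj] at hmem
    exact hmem
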